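/- Let P, Q, P∪Q be convex polytopes in ℝⁿ and partition the unit sphere into ω₁ = {u : h_P(u) = h_Q(u)}, ω₂ = {u : h_P(u) > h_Q(u)}, ω₃ = {u : h_P(u) < h_Q(u)}. Then for any Borel set η₂ ⊆ ω₂, the inverse Gauss images satisfy ν⁻¹_{P∪Q}(η₂) = ν⁻¹_P(η₂) and ν⁻¹_{P∩Q}(η₂) = ν⁻¹_Q(η₂), and hence the surface area measures satisfy S_{P∪Q}(η₂) = S_P(η₂) and S_{P∩Q}(η₂) = S_Q(η₂). -/

import Mathlib

open MeasureTheory RealInnerProductSpace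

/-- A (nonempty, compact) convex polytope: the convex hull of a nonempty finite set. -/
def IsPolytope {n : ℕ} (P : Set (EuclideanSpace ℝ (Fin n))) : Prop :=
  ∃ S : Finset (EuclideanSpace ℝ (Fin n)), S.Nonempty ∧
    P = convexHull ℝ (S : Set (EuclideanSpace ℝ (Fin n)))

/-- The support function. -/
noncomputable def suppFn {n : ℕ} (P : Set (EuclideanSpace ℝ (Fin n)))
    (u : EuclideanSpace ℝ (Fin n)) : ℝ :=
  sSup ((fun y => ⟪u, y⟫) '' P)

/-- The inverse Gauss image `ν⁻¹_P(η) = {x ∈ P : x·v = h_P(v) for some v ∈ η}`. -/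
def gaussInv {n : ℕ} (P : Set (EuclideanSpace ℝ (Fin n)))
    (η : Set (EuclideanSpace ℝ (Fin n))) : Set (EuclideanSpace ℝ (Fin n)) :=
  {x | x ∈ P ∧ ∃ v ∈ η, ⟪x, v⟫ = suppFn P v}

namespace GaussAux

variable {n : ℕ}

lemma isCompact_of_polytope {P : Set (EuclideanSpace ℝ (Fin n))} (h : IsPolytope P) :
    IsCompact P := by
  obtain ⟨S, -, rfl⟩ := h
  exact S.finite_toSet.isCompact_convexHull ℝ

lemma nonempty_of_polytope {P : Set (EuclideanSpace ℝ (Fin n))} (h : IsPolytope P) :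
    P.Nonempty := by
  obtain ⟨S, ⟨x, hx⟩, rfl⟩ := h
  exact ⟨x, subset_convexHull ℝ _ hx⟩

lemma inner_cont (v : EuclideanSpace ℝ (Fin n)) :
    Continuous fun y : EuclideanSpace ℝ (Fin n) => ⟪v, y⟫ :=
  continuous_const.inner continuous_id

lemma bddAbove_img {P : Set (EuclideanSpace ℝ (Fin n))} (hP : IsCompact P)
    (v : EuclideanSpace ℝ (Fin n)) : BddAbove ((fun y => ⟪v, y⟫) '' P) :=
  (hP.image (inner_cont v)).bddAbove

lemma le_suppFn {P : Set (EuclideanSpace ℝ (Fin n))} (hP : IsCompact P)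
    {x v : EuclideanSpace ℝ (Fin n)} (hx : x ∈ P) : ⟪v, x⟫ ≤ suppFn P v :=
  le_csSup (bddAbove_img hP v) ⟨x, hx, rfl⟩

lemma suppFn_le {P : Set (EuclideanSpace ℝ (Fin n))} (hne : P.Nonempty)
    {v : EuclideanSpace ℝ (Fin n)} {c : ℝ} (h : ∀ x ∈ P, ⟪v, x⟫ ≤ c) :
    suppFn P v ≤ c :=
  csSup_le (hne.image _) (by rintro _ ⟨x, hx, rfl⟩; exact h x hx)

/-- A maximizer of `⟪v, ·⟫` over a nonempty compact set attains the support function. -/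
lemma exists_max {P : Set (EuclideanSpace ℝ (Fin n))} (hP : IsCompact P)
    (hne : P.Nonempty) (v : EuclideanSpace ℝ (Fin n)) :
    ∃ x ∈ P, ⟪v, x⟫ = suppFn P v := by
  obtain ⟨x, hx, hmax⟩ := hP.exists_isMaxOn hne (inner_cont v).continuousOn
  exact ⟨x, hx, le_antisymm (le_suppFn hP hx) (suppFn_le hne fun y hy => hmax hy)⟩

/-- Key geometric fact: if `P ∪ Q` is convex and `h_Q v < h_P v`, then the face of `Q`
in direction `v` is contained in `P`. -/
lemma face_subset {P Q : Set (EuclideanSpace ℝ (Fin n))}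
    (hPc : IsCompact P) (hPne : P.Nonempty) (hQc : IsCompact Q)
    (hU : Convex ℝ (P ∪ Q)) {v : EuclideanSpace ℝ (Fin n)}
    (hlt : suppFn Q v < suppFn P v)
    {x : EuclideanSpace ℝ (Fin n)} (hxQ : x ∈ Q) (hxv : ⟪v, x⟫ = suppFn Q v) :
    x ∈ P := by
  -- pick `p ∈ P` with `⟪v, p⟫ > suppFn Q v`
  obtain ⟨p, hp, hpv⟩ := exists_max hPc hPne v
  have hpQ : suppFn Q v < ⟪v, p⟫ := hpv ▸ hlt
  by_cases hxp : x = p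
  · exact hxp ▸ hp
  -- the open segment from x to p lies in P
  have hseg : openSegment ℝ x p ⊆ P := by
    rintro z ⟨a, b, ha, hb, hab, rfl⟩
    have hzU : a • x + b • p ∈ P ∪ Q :=
      hU (Or.inr hxQ) (Or.inl hp) ha.le hb.le hab
    have hzv : suppFn Q v < ⟪v, a • x + b • p⟫ := by
      have : ⟪v, a • x + b • p⟫ = a * ⟪v, x⟫ + b * ⟪v, p⟫ := by
        rw [inner_add_right, real_inner_smul_right, real_inner_smul_right]
      rw [this, hxv]
      have h1 : b * suppFn Q v < b * ⟪v, p⟫ := mul_lt_mul_of_pos_left hpQ hb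
      have h2 : a * suppFn Q v + b * suppFn Q v = suppFn Q v := by
        rw [← add_mul, hab, one_mul]
      linarith
    rcases hzU with h | h
    · exact h
    · exact absurd (le_suppFn hQc h) (not_le.mpr hzv)
  -- x is in the closure of the open segment, and P is closed
  have hx_cl : x ∈ closure (openSegment ℝ x p) := by
    rw [closure_openSegment]
    exact left_mem_segment ℝ x p
  exact hPc.isClosed.closure_subset_iff.mpr hseg hx_cl

end GaussAux

/-- On the part `ω₂` of the sphere where `h_P > h_Q`, the inverse Gauss images of `P ∪ Q`
and `P ∩ Q` agree with those of `P` and `Q` respectively, hence so do the surface area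
measures (given by `(n-1)`-dimensional Hausdorff measure). -/
theorem gaussInv_union_inter {n : ℕ}
    (P Q : Set (EuclideanSpace ℝ (Fin n)))
    (hP : IsPolytope P) (hQ : IsPolytope Q) (hU : Convex ℝ (P ∪ Q))
    (η : Set (EuclideanSpace ℝ (Fin n))) (hmeas : MeasurableSet η)
    (hη : η ⊆ {u | ‖u‖ = 1 ∧ suppFn Q u < suppFn P u}) :
    gaussInv (P ∪ Q) η = gaussInv P η ∧
    gaussInv (P ∩ Q) η = gaussInv Q η ∧
    μH[(n : ℝ) - 1] (gaussInv (P ∪ Q) η) = μH[(n : ℝ) - 1] (gaussInv P η) ∧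
    μH[(n : ℝ) - 1] (gaussInv (P ∩ Q) η) = μH[(n : ℝ) - 1] (gaussInv Q η) := by
  open GaussAux in
  have hPc := isCompact_of_polytope hP
  have hQc := GaussAux.isCompact_of_polytope hQ
  have hPne := GaussAux.nonempty_of_polytope hP
  have hQne := GaussAux.nonempty_of_polytope hQ
  have hUc : IsCompact (P ∪ Q) := hPc.union hQc
  have hUne : (P ∪ Q).Nonempty := hPne.mono Set.subset_union_left
  -- for v ∈ η, suppFn (P ∪ Q) v = suppFn P v
  have hsuppU : ∀ v ∈ η, suppFn (P ∪ Q) v = suppFn P v := by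
    intro v hv
    obtain ⟨-, hlt⟩ := hη hv
    refine le_antisymm (GaussAux.suppFn_le hUne ?_)
      (GaussAux.suppFn_le hPne fun y hy => GaussAux.le_suppFn hUc (Or.inl hy))
    rintro y (hy | hy)
    · exact GaussAux.le_suppFn hPc hy
    · exact (GaussAux.le_suppFn hQc hy).trans hlt.le
  -- first set equality
  have h1 : gaussInv (P ∪ Q) η = gaussInv P η := by
    ext x
    constructor
    · rintro ⟨hx, v, hv, hxv⟩
      obtain ⟨-, hlt⟩ := hη hv
      rw [real_inner_comm, hsuppU v hv] at hxv
      rcases hx with hx | hx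
      · exact ⟨hx, v, hv, by rw [real_inner_comm]; exact hxv⟩
      · exact absurd ((hxv ▸ GaussAux.le_suppFn hQc hx : suppFn P v ≤ suppFn Q v))
          (not_le.mpr hlt)
    · rintro ⟨hx, v, hv, hxv⟩
      exact ⟨Or.inl hx, v, hv, by rw [hsuppU v hv]; exact hxv⟩
  -- for v ∈ η, the face of Q in direction v is inside P, and suppFn (P ∩ Q) v = suppFn Q v
  have hface : ∀ v ∈ η, ∀ x ∈ Q, ⟪v, x⟫ = suppFn Q v → x ∈ P := by
    intro v hv x hx hxv
    obtain ⟨-, hlt⟩ := hη hv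
    exact GaussAux.face_subset hPc hPne hQc hU hlt hx hxv
  have hsuppI : ∀ v ∈ η, suppFn (P ∩ Q) v = suppFn Q v := by
    intro v hv
    obtain ⟨y, hyQ, hyv⟩ := GaussAux.exists_max hQc hQne v
    have hyP : y ∈ P := hface v hv y hyQ hyv
    have hIne : (P ∩ Q).Nonempty := ⟨y, hyP, hyQ⟩
    refine le_antisymm
      (GaussAux.suppFn_le hIne fun z hz => GaussAux.le_suppFn hQc hz.2) ?_
    calc suppFn Q v = ⟪v, y⟫ := hyv.symm
      _ ≤ suppFn (P ∩ Q) v :=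
        GaussAux.le_suppFn (hPc.inter_right hQc.isClosed) ⟨hyP, hyQ⟩
  -- second set equality
  have h2 : gaussInv (P ∩ Q) η = gaussInv Q η := by
    ext x
    constructor
    · rintro ⟨hx, v, hv, hxv⟩
      rw [hsuppI v hv] at hxv
      exact ⟨hx.2, v, hv, hxv⟩
    · rintro ⟨hx, v, hv, hxv⟩
      have hxP : x ∈ P := hface v hv x hx (by rw [← real_inner_comm]; exact hxv)
      exact ⟨⟨hxP, hx⟩, v, hv, by rw [hsuppI v hv]; exact hxv⟩
  exact ⟨h1, h2, by rw [h1], by rw [h2]⟩
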